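/- Let H be a simple bipartite matching covered graph and let b be a vertex of H of degree at least three. If e and f are two distinct edges incident with b that both lie in a common 4-cycle of H, then at least one of e and f is removable in H. -/

import Mathlib

/-! Preamble: definitions for matching covered graphs, bricks, removable
doubletons, R-compatible/R-thin edges, retracts, ladders, partial biwheels,
R-configurations, and the eleven infinite families. -/

/-- The graph has a perfect matching. -/
def HasPerfMatching {V : Type*} (G : SimpleGraph V) : Prop :=
  ∃ M : G.Subgraph, M.IsPerfectMatching

/-- A graph (with at least two vertices) is matching covered if it is connected
and each of its edges lies in some perfect matching. -/
def MatchingCovered {V : Type*} (G : SimpleGraph V) : Prop :=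
  2 ≤ Nat.card V ∧ G.Connected ∧
    ∀ e ∈ G.edgeSet, ∃ M : G.Subgraph, M.IsPerfectMatching ∧ e ∈ M.edgeSet

/-- An edge of a matching covered graph is removable if deleting it leaves a
matching covered graph. -/
def RemovableEdge {V : Type*} (G : SimpleGraph V) (e : Sym2 V) : Prop :=
  e ∈ G.edgeSet ∧ MatchingCovered (G.deleteEdges {e})

/-- The number of odd connected components. -/
noncomputable def oddCompCount {V : Type*} (G : SimpleGraph V) : ℕ :=
  Nat.card {c : G.ConnectedComponent // Odd (Nat.card c.supp)}

/-- `S` is a barrier of `G`: `S` is nonempty and the number of odd components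
of `G − S` equals `|S|`. -/
def IsBarrierOf {V : Type*} (G : SimpleGraph V) (S : Set V) : Prop :=
  S.Nonempty ∧ oddCompCount (G.induce (Sᶜ : Set V)) = S.ncard

/-- Bicritical: at least four vertices, and deleting any two distinct vertices
leaves a graph with a perfect matching. -/
def BicriticalGraph {V : Type*} (G : SimpleGraph V) : Prop :=
  4 ≤ Nat.card V ∧ ∀ u v : V, u ≠ v →
    HasPerfMatching (G.induce (({u, v} : Set V)ᶜ))

/-- 3-connected: at least four vertices, and deleting any set of at most two
vertices leaves a connected graph. -/
def ThreeConnectedGraph {V : Type*} (G : SimpleGraph V) : Prop :=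
  4 ≤ Nat.card V ∧ ∀ S : Set V, S.ncard ≤ 2 → (G.induce (Sᶜ : Set V)).Connected

/-- A brick is a 3-connected bicritical graph. -/
def BrickGraph {V : Type*} (G : SimpleGraph V) : Prop :=
  ThreeConnectedGraph G ∧ BicriticalGraph G

/-- `A`, `B` form a bipartition of `G`. -/
def BipartitionOf {V : Type*} (G : SimpleGraph V) (A B : Set V) : Prop :=
  A ∪ B = Set.univ ∧ Disjoint A B ∧ ∀ ⦃u v : V⦄, G.Adj u v → (u ∈ A ↔ v ∈ B)

/-- `G` is bipartite. -/
def BipartiteGraph {V : Type*} (G : SimpleGraph V) : Prop :=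
  ∃ A B : Set V, BipartitionOf G A B

/-- `{α, β}` is a removable doubleton of `G`: a pair of distinct edges whose
deletion leaves a bipartite matching covered graph. -/
def RemovableDoubleton {V : Type*} (G : SimpleGraph V) (α β : Sym2 V) : Prop :=
  α ≠ β ∧ α ∈ G.edgeSet ∧ β ∈ G.edgeSet ∧
    BipartiteGraph (G.deleteEdges {α, β}) ∧ MatchingCovered (G.deleteEdges {α, β})

/-- An `R`-brick: a brick with a fixed removable doubleton `R = {α, β}`. -/
def RBrick {V : Type*} (G : SimpleGraph V) (α β : Sym2 V) : Prop :=
  BrickGraph G ∧ RemovableDoubleton G α β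

/-- `V(R)`: the set of the four ends of the doubleton edges. -/
def VR {V : Type*} (α β : Sym2 V) : Set V := {v | v ∈ α ∨ v ∈ β}

/-- `e` is `R`-compatible: it is an edge of `H := G − R` and is removable in
both `G` and `H`. -/
def RCompatible {V : Type*} (G : SimpleGraph V) (α β e : Sym2 V) : Prop :=
  e ∈ (G.deleteEdges {α, β}).edgeSet ∧
    MatchingCovered (G.deleteEdges {e}) ∧
    MatchingCovered ((G.deleteEdges {α, β}).deleteEdges {e})

/-- `e` is `R`-thin: `R`-compatible, and every barrier of `G − e` has at most
two vertices. -/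
def RThin {V : Type*} (G : SimpleGraph V) (α β e : Sym2 V) : Prop :=
  RCompatible G α β e ∧
    ∀ S : Set V, IsBarrierOf (G.deleteEdges {e}) S → S.ncard ≤ 2

/-- The number of maximal nontrivial barriers of a graph. -/
noncomputable def barrierIndex {V : Type*} (G : SimpleGraph V) : ℕ :=
  Set.ncard {S : Set V | IsBarrierOf G S ∧ 2 ≤ S.ncard ∧
    ∀ T : Set V, IsBarrierOf G T → S ⊆ T → T = S}

/-- Degree of a vertex (as the cardinality of its neighbourhood). -/
noncomputable def degOf {V : Type*} (G : SimpleGraph V) (v : V) : ℕ :=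
  (G.neighborSet v).ncard

/-- The relation identifying each degree-two vertex with its neighbours
(bicontraction of all degree-two vertices at once). -/
def bicontractPairRel {V : Type*} (G : SimpleGraph V) (u v : V) : Prop :=
  G.Adj u v ∧ (degOf G u = 2 ∨ degOf G v = 2)

/-- The vertex identifications performed when taking the retract. -/
def retractSetoid {V : Type*} (G : SimpleGraph V) : Setoid V :=
  Relation.EqvGen.setoid (bicontractPairRel G)

/-- The retract of `G` (as a simple graph on the quotient). -/
def retractGraph {V : Type*} (G : SimpleGraph V) :
    SimpleGraph (Quotient (retractSetoid G)) where
  Adj X Y := X ≠ Y ∧ ∃ u v : V,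
    Quotient.mk (retractSetoid G) u = X ∧ Quotient.mk (retractSetoid G) v = Y ∧ G.Adj u v
  symm := by
    constructor
    rintro X Y ⟨hne, u, v, hu, hv, huv⟩
    exact ⟨hne.symm, v, u, hv, hu, huv.symm⟩
  loopless := by
    constructor
    rintro X ⟨hne, -⟩
    exact hne rfl

/-- The retract of `G` has a pair of parallel edges. -/
def retractHasParallel {V : Type*} (G : SimpleGraph V) : Prop :=
  ∃ p q p' q' : V, G.Adj p q ∧ G.Adj p' q' ∧ s(p, q) ≠ s(p', q') ∧
    ¬ Relation.EqvGen (bicontractPairRel G) p q ∧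
    ((Relation.EqvGen (bicontractPairRel G) p p' ∧
        Relation.EqvGen (bicontractPairRel G) q q') ∨
     (Relation.EqvGen (bicontractPairRel G) p q' ∧
        Relation.EqvGen (bicontractPairRel G) q p'))

/-- `e` is strictly `R`-thin: `R`-thin and the retract of `G − e` has no
parallel edges. -/
def StrictlyRThin {V : Type*} (G : SimpleGraph V) (α β e : Sym2 V) : Prop :=
  RThin G α β e ∧ ¬ retractHasParallel (G.deleteEdges {e})

/-- The ladder with `m` rungs: two paths `x₀…x_{m-1}` (first coordinate `0`)
and `y₀…y_{m-1}` (first coordinate `1`) together with the rungs `xᵢyᵢ`. -/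
def ladderGraph (m : ℕ) : SimpleGraph (Fin 2 × Fin m) :=
  SimpleGraph.fromRel (fun p q =>
    (p.1 = q.1 ∧ p.2.val + 1 = q.2.val) ∨ (p.1 ≠ q.1 ∧ p.2 = q.2))

/-- The partial biwheel on the odd path `x₀…x_{2k-1}` (the `inl` vertices)
with hubs `u = inr 0` (joined to the even-indexed path vertices) and
`w = inr 1` (joined to the odd-indexed path vertices). -/
def biwheelGraph (k : ℕ) : SimpleGraph (Fin (2 * k) ⊕ Fin 2) :=
  SimpleGraph.fromRel (fun p q =>
    match p, q with
    | Sum.inl i, Sum.inl j => i.val + 1 = j.val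
    | Sum.inr h, Sum.inl i => (h = 0 ∧ i.val % 2 = 0) ∨ (h = 1 ∧ i.val % 2 = 1)
    | _, _ => False)

/-- The subgraph `K` of `Γ` is a ladder with `m` rungs and corners `a u b w`:
`au` and `bw` are its external rungs, labelled according to the convention
that `a` and `w` lie in one colour class and `b` and `u` in the other. -/
def LadderOn {W : Type*} (Γ : SimpleGraph W) (K : Γ.Subgraph) (m : ℕ)
    (a u b w : W) : Prop :=
  ∃ (hm : 3 ≤ m) (φ : ladderGraph m ≃g K.coe),
    (φ ((0 : Fin 2), (⟨0, by omega⟩ : Fin m))).val = a ∧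
    (φ ((1 : Fin 2), (⟨0, by omega⟩ : Fin m))).val = u ∧
    (if m % 2 = 1 then
        (φ ((0 : Fin 2), (⟨m - 1, by omega⟩ : Fin m))).val = w ∧
        (φ ((1 : Fin 2), (⟨m - 1, by omega⟩ : Fin m))).val = b
      else
        (φ ((1 : Fin 2), (⟨m - 1, by omega⟩ : Fin m))).val = w ∧
        (φ ((0 : Fin 2), (⟨m - 1, by omega⟩ : Fin m))).val = b)

/-- The subgraph `K` of `Γ` is a partial biwheel (parameter `k`, order `2k+2`)
with ends `a`, `b` and hubs `u`, `w`; its external spokes are `au` and `bw`. -/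
def BiwheelOn {W : Type*} (Γ : SimpleGraph W) (K : Γ.Subgraph) (k : ℕ)
    (a u b w : W) : Prop :=
  ∃ (hk : 2 ≤ k) (φ : biwheelGraph k ≃g K.coe),
    (φ (Sum.inl (⟨0, by omega⟩ : Fin (2 * k)))).val = a ∧
    (φ (Sum.inl (⟨2 * k - 1, by omega⟩ : Fin (2 * k)))).val = b ∧
    (φ (Sum.inr 0)).val = u ∧
    (φ (Sum.inr 1)).val = w

/-- Truncated biwheel: a spanning partial biwheel plus the edges `aw`, `bu`. -/
def IsTruncatedBiwheel {V : Type*} (G : SimpleGraph V) : Prop :=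
  ∃ (K : G.Subgraph) (k : ℕ) (a u b w : V),
    BiwheelOn G K k a u b w ∧ K.verts = Set.univ ∧
    G.edgeSet = K.edgeSet ∪ {s(a, w), s(b, u)}

/-- Prism: a spanning odd ladder plus the edges `aw`, `bu`. -/
def IsPrism {V : Type*} (G : SimpleGraph V) : Prop :=
  ∃ (K : G.Subgraph) (m : ℕ) (a u b w : V),
    Odd m ∧ LadderOn G K m a u b w ∧ K.verts = Set.univ ∧
    G.edgeSet = K.edgeSet ∪ {s(a, w), s(b, u)}

/-- Möbius ladder: a spanning even ladder plus the edges `aw`, `bu`;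
by convention `K₄` is also a Möbius ladder. -/
def IsMobiusLadder {V : Type*} (G : SimpleGraph V) : Prop :=
  (∃ (K : G.Subgraph) (m : ℕ) (a u b w : V),
    Even m ∧ LadderOn G K m a u b w ∧ K.verts = Set.univ ∧
    G.edgeSet = K.edgeSet ∪ {s(a, w), s(b, u)}) ∨
  Nonempty (G ≃g (⊤ : SimpleGraph (Fin 4)))

/-- Staircase: a ladder plus two new vertices `a₂`, `b₂` and the five edges
`a a₂`, `u a₂`, `b b₂`, `w b₂`, `a₂ b₂`. -/
def IsStaircase {V : Type*} (G : SimpleGraph V) : Prop :=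
  ∃ (K : G.Subgraph) (m : ℕ) (a u b w a2 b2 : V),
    LadderOn G K m a u b w ∧
    a2 ∉ K.verts ∧ b2 ∉ K.verts ∧ a2 ≠ b2 ∧
    K.verts ∪ {a2, b2} = Set.univ ∧
    G.edgeSet = K.edgeSet ∪ {s(a, a2), s(u, a2), s(b, b2), s(w, b2), s(a2, b2)}

/-- Pseudo-biwheel: a partial biwheel of order at least eight plus two new
vertices `a₂`, `b₂` and the five edges `a a₂`, `u a₂`, `b b₂`, `w b₂`,
`a₂ b₂`. -/
def IsPseudoBiwheel {V : Type*} (G : SimpleGraph V) : Prop :=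
  ∃ (K : G.Subgraph) (k : ℕ) (a u b w a2 b2 : V),
    3 ≤ k ∧ BiwheelOn G K k a u b w ∧
    a2 ∉ K.verts ∧ b2 ∉ K.verts ∧ a2 ≠ b2 ∧
    K.verts ∪ {a2, b2} = Set.univ ∧
    G.edgeSet = K.edgeSet ∪ {s(a, a2), s(u, a2), s(b, b2), s(w, b2), s(a2, b2)}

/-- Double biwheel of type I: two partial biwheels sharing precisely their
hubs `u`, `w`, plus the edges `a₁a₂` and `b₁b₂`. -/
def IsDoubleBiwheelI {V : Type*} (G : SimpleGraph V) : Prop :=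
  ∃ (K1 K2 : G.Subgraph) (k1 k2 : ℕ) (a1 b1 a2 b2 u w : V),
    BiwheelOn G K1 k1 a1 u b1 w ∧ BiwheelOn G K2 k2 a2 u b2 w ∧
    K1.verts ∩ K2.verts = {u, w} ∧ K1.verts ∪ K2.verts = Set.univ ∧
    G.edgeSet = K1.edgeSet ∪ K2.edgeSet ∪ {s(a1, a2), s(b1, b2)}

/-- Double ladder of type I. -/
def IsDoubleLadderI {V : Type*} (G : SimpleGraph V) : Prop :=
  ∃ (K1 K2 : G.Subgraph) (m1 m2 : ℕ) (a1 b1 a2 b2 u w : V),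
    LadderOn G K1 m1 a1 u b1 w ∧ LadderOn G K2 m2 a2 u b2 w ∧
    K1.verts ∩ K2.verts = {u, w} ∧ K1.verts ∪ K2.verts = Set.univ ∧
    G.edgeSet = K1.edgeSet ∪ K2.edgeSet ∪ {s(a1, a2), s(b1, b2)}

/-- Laddered biwheel of type I. -/
def IsLadderedBiwheelI {V : Type*} (G : SimpleGraph V) : Prop :=
  ∃ (K1 K2 : G.Subgraph) (k1 m2 : ℕ) (a1 b1 a2 b2 u w : V),
    BiwheelOn G K1 k1 a1 u b1 w ∧ LadderOn G K2 m2 a2 u b2 w ∧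
    K1.verts ∩ K2.verts = {u, w} ∧ K1.verts ∪ K2.verts = Set.univ ∧
    G.edgeSet = K1.edgeSet ∪ K2.edgeSet ∪ {s(a1, a2), s(b1, b2)}

/-- Double biwheel of type II: two vertex-disjoint partial biwheels of order
at least eight plus the four edges `a₁a₂`, `b₁b₂`, `u₁w₂`, `w₁u₂`. -/
def IsDoubleBiwheelII {V : Type*} (G : SimpleGraph V) : Prop :=
  ∃ (K1 K2 : G.Subgraph) (k1 k2 : ℕ) (a1 u1 b1 w1 a2 u2 b2 w2 : V),
    3 ≤ k1 ∧ 3 ≤ k2 ∧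
    BiwheelOn G K1 k1 a1 u1 b1 w1 ∧ BiwheelOn G K2 k2 a2 u2 b2 w2 ∧
    K1.verts ∩ K2.verts = ∅ ∧ K1.verts ∪ K2.verts = Set.univ ∧
    G.edgeSet = K1.edgeSet ∪ K2.edgeSet ∪
      {s(a1, a2), s(b1, b2), s(u1, w2), s(w1, u2)}

/-- Double ladder of type II. -/
def IsDoubleLadderII {V : Type*} (G : SimpleGraph V) : Prop :=
  ∃ (K1 K2 : G.Subgraph) (m1 m2 : ℕ) (a1 u1 b1 w1 a2 u2 b2 w2 : V),
    LadderOn G K1 m1 a1 u1 b1 w1 ∧ LadderOn G K2 m2 a2 u2 b2 w2 ∧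
    K1.verts ∩ K2.verts = ∅ ∧ K1.verts ∪ K2.verts = Set.univ ∧
    G.edgeSet = K1.edgeSet ∪ K2.edgeSet ∪
      {s(a1, a2), s(b1, b2), s(u1, w2), s(w1, u2)}

/-- Laddered biwheel of type II. -/
def IsLadderedBiwheelII {V : Type*} (G : SimpleGraph V) : Prop :=
  ∃ (K1 K2 : G.Subgraph) (k1 m2 : ℕ) (a1 u1 b1 w1 a2 u2 b2 w2 : V),
    3 ≤ k1 ∧
    BiwheelOn G K1 k1 a1 u1 b1 w1 ∧ LadderOn G K2 m2 a2 u2 b2 w2 ∧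
    K1.verts ∩ K2.verts = ∅ ∧ K1.verts ∪ K2.verts = Set.univ ∧
    G.edgeSet = K1.edgeSet ∪ K2.edgeSet ∪
      {s(a1, a2), s(b1, b2), s(u1, w2), s(w1, u2)}

/-- Membership in one of the eleven infinite families. -/
def InEleven {V : Type*} (G : SimpleGraph V) : Prop :=
  IsTruncatedBiwheel G ∨ IsPrism G ∨ IsMobiusLadder G ∨ IsStaircase G ∨
  IsPseudoBiwheel G ∨ IsDoubleBiwheelI G ∨ IsDoubleLadderI G ∨
  IsLadderedBiwheelI G ∨ IsDoubleBiwheelII G ∨ IsDoubleLadderII G ∨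
  IsLadderedBiwheelII G

/-- An `R`-ladder configuration: a subgraph `K` of `H := G − R` which is a
ladder with external rungs `au` and `bw` (free corners `u`, `w`) such that
every vertex of `K` except possibly `u` and `w` is cubic in `G`, the corners
`a` and `b` lie in `V(R)`, and every internal rung is an `R`-thin edge of `G`
whose index is two. -/
def RLadderConfig {V : Type*} (G : SimpleGraph V) (α β : Sym2 V)
    (K : (G.deleteEdges {α, β}).Subgraph) (a u b w : V) : Prop :=
  ∃ (m : ℕ) (hm : 3 ≤ m) (φ : ladderGraph m ≃g K.coe),
    (φ ((0 : Fin 2), (⟨0, by omega⟩ : Fin m))).val = a ∧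
    (φ ((1 : Fin 2), (⟨0, by omega⟩ : Fin m))).val = u ∧
    (if m % 2 = 1 then
        (φ ((0 : Fin 2), (⟨m - 1, by omega⟩ : Fin m))).val = w ∧
        (φ ((1 : Fin 2), (⟨m - 1, by omega⟩ : Fin m))).val = b
      else
        (φ ((1 : Fin 2), (⟨m - 1, by omega⟩ : Fin m))).val = w ∧
        (φ ((0 : Fin 2), (⟨m - 1, by omega⟩ : Fin m))).val = b) ∧
    (∀ v ∈ K.verts, v ≠ u → v ≠ w → degOf G v = 3) ∧
    a ∈ VR α β ∧ b ∈ VR α β ∧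
    (∀ i : Fin m, 0 < i.val → i.val < m - 1 →
      RThin G α β s((φ ((0 : Fin 2), i)).val, (φ ((1 : Fin 2), i)).val) ∧
      barrierIndex
        (G.deleteEdges {s((φ ((0 : Fin 2), i)).val, (φ ((1 : Fin 2), i)).val)}) = 2)

/-- An `R`-biwheel configuration: a subgraph `K` of `H := G − R` which is a
partial biwheel with external spokes `au` and `bw` (hubs `u`, `w`) such that
the hubs are not cubic in `G`, every other vertex of `K` is cubic in `G`, the
ends `a` and `b` lie in `V(R)`, and every internal spoke is an `R`-thin edge
of `G` whose index is one. -/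
def RBiwheelConfig {V : Type*} (G : SimpleGraph V) (α β : Sym2 V)
    (K : (G.deleteEdges {α, β}).Subgraph) (a u b w : V) : Prop :=
  ∃ (k : ℕ) (hk : 2 ≤ k) (φ : biwheelGraph k ≃g K.coe),
    (φ (Sum.inl (⟨0, by omega⟩ : Fin (2 * k)))).val = a ∧
    (φ (Sum.inl (⟨2 * k - 1, by omega⟩ : Fin (2 * k)))).val = b ∧
    (φ (Sum.inr 0)).val = u ∧
    (φ (Sum.inr 1)).val = w ∧
    degOf G u ≠ 3 ∧ degOf G w ≠ 3 ∧
    (∀ v ∈ K.verts, v ≠ u → v ≠ w → degOf G v = 3) ∧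
    a ∈ VR α β ∧ b ∈ VR α β ∧
    (∀ e ∈ K.edgeSet, (u ∈ e ∨ w ∈ e) → e ≠ s(a, u) → e ≠ s(b, w) →
      RThin G α β e ∧ barrierIndex (G.deleteEdges {e}) = 1)

/-- An `R`-configuration: an `R`-ladder or an `R`-biwheel, with free corners
`u` and `w`. -/
def RConfig {V : Type*} (G : SimpleGraph V) (α β : Sym2 V)
    (K : (G.deleteEdges {α, β}).Subgraph) (a u b w : V) : Prop :=
  RLadderConfig G α β K a u b w ∨ RBiwheelConfig G α β K a u b w

/-- A 4-cycle on the four (distinct) vertices `v0 v1 v2 v3`. -/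
def Is4Cycle {V : Type*} (H : SimpleGraph V) (v0 v1 v2 v3 : V) : Prop :=
  v0 ≠ v1 ∧ v0 ≠ v2 ∧ v0 ≠ v3 ∧ v1 ≠ v2 ∧ v1 ≠ v3 ∧ v2 ≠ v3 ∧
  H.Adj v0 v1 ∧ H.Adj v1 v2 ∧ H.Adj v2 v3 ∧ H.Adj v3 v0

/-- The cut `∂(X)`. -/
def edgeCutOf {V : Type*} (G : SimpleGraph V) (X : Set V) : Set (Sym2 V) :=
  {e | e ∈ G.edgeSet ∧ ∃ p q : V, e = s(p, q) ∧ p ∈ X ∧ q ∉ X}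

/-- The cut `∂(X)` is tight: every perfect matching contains exactly one of
its edges. -/
def TightCut {V : Type*} (G : SimpleGraph V) (X : Set V) : Prop :=
  ∀ M : G.Subgraph, M.IsPerfectMatching → (M.edgeSet ∩ edgeCutOf G X).ncard = 1

/-- A brace: a bipartite matching covered graph with no nontrivial tight cut. -/
def IsBrace {V : Type*} (G : SimpleGraph V) : Prop :=
  BipartiteGraph G ∧ MatchingCovered G ∧
    ¬ ∃ X : Set V, 2 ≤ X.ncard ∧ 2 ≤ Xᶜ.ncard ∧ TightCut G X

/-! ### Auxiliary lemmas for stmt9 -/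

open Set

/-- Neighbourhood of a set. -/
private def NSet {V : Type*} (G : SimpleGraph V) (S : Set V) : Set V :=
  {y | ∃ x ∈ S, G.Adj x y}

private lemma NSet_union {V : Type*} (G : SimpleGraph V) (S T : Set V) :
    NSet G (S ∪ T) = NSet G S ∪ NSet G T := by
  ext y; simp only [NSet, Set.mem_setOf_eq, Set.mem_union]
  constructor
  · rintro ⟨x, hx | hx, hadj⟩
    · exact Or.inl ⟨x, hx, hadj⟩
    · exact Or.inr ⟨x, hx, hadj⟩
  · rintro (⟨x, hx, hadj⟩ | ⟨x, hx, hadj⟩)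
    · exact ⟨x, Or.inl hx, hadj⟩
    · exact ⟨x, Or.inr hx, hadj⟩

private lemma NSet_mono {V : Type*} (G : SimpleGraph V) {S T : Set V} (h : S ⊆ T) :
    NSet G S ⊆ NSet G T := by
  rintro y ⟨x, hx, hadj⟩; exact ⟨x, h hx, hadj⟩

private lemma bip_symm {V : Type*} {H : SimpleGraph V} {A B : Set V}
    (h : BipartitionOf H A B) : BipartitionOf H B A := by
  obtain ⟨hU, hD, hAdj⟩ := h
  refine ⟨by rw [Set.union_comm]; exact hU, hD.symm, fun u v huv => ?_⟩
  have h1 := hAdj huv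
  have h2 := hAdj huv.symm
  constructor
  · intro huB
    by_contra hvA
    have hvB : v ∈ B := by
      rcases (Set.eq_univ_iff_forall.mp hU v) with h | h
      · exact absurd h hvA
      · exact h
    exact absurd ((h2.mpr huB)) (fun hvA' => hvA hvA')
  · intro hvA
    by_contra huB
    have huA : u ∈ A := by
      rcases (Set.eq_univ_iff_forall.mp hU u) with h | h
      · exact h
      · exact absurd h huB
    exact absurd (h1.mp huA) (hD.ne_of_mem hvA · rfl)
private lemma boundary_edge {V : Type*} {G : SimpleGraph V} {X : Set V} :
    ∀ {x y : V}, G.Walk x y → x ∈ X → y ∉ X → ∃ p q, p ∈ X ∧ q ∉ X ∧ G.Adj p q := by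
  intro x y w
  induction w with
  | nil => intro hx hy; exact absurd hx hy
  | @cons x' v' y' h w ih =>
    intro hx hy
    by_cases hv : v' ∈ X
    · exact ih hv hy
    · exact ⟨_, _, hx, hv, h⟩

private lemma exists_adj_of_MC {V : Type*} [Fintype V] {H : SimpleGraph V}
    (hMC : MatchingCovered H) : ∃ u v : V, H.Adj u v := by
  obtain ⟨hcard, hconn, _⟩ := hMC
  rw [Nat.card_eq_fintype_card] at hcard
  obtain ⟨a, b, hab⟩ := Fintype.exists_pair_of_one_lt_card (α := V) (by omega)
  obtain ⟨w⟩ := hconn.preconnected a b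
  cases w with
  | nil => exact absurd rfl hab
  | cons h _ => exact ⟨_, _, h⟩

private lemma exists_pm {V : Type*} [Fintype V] {H : SimpleGraph V}
    (hMC : MatchingCovered H) : ∃ M : H.Subgraph, M.IsPerfectMatching := by
  obtain ⟨u, v, huv⟩ := exists_adj_of_MC hMC
  obtain ⟨M, hM, -⟩ := hMC.2.2 s(u, v) (H.mem_edgeSet.mpr huv)
  exact ⟨M, hM⟩

/-- Partner function of a perfect matching. -/
private lemma pm_partner {V : Type*} {H : SimpleGraph V} {M : H.Subgraph}
    (hM : M.IsPerfectMatching) :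
    ∃ P : V → V, (∀ a, M.Adj a (P a)) ∧ (∀ a y, M.Adj a y → y = P a) := by
  have h := SimpleGraph.Subgraph.isPerfectMatching_iff.mp hM
  choose P hP hPu using h
  exact ⟨P, hP, hPu⟩

private lemma cardAB {V : Type*} [Fintype V] {H : SimpleGraph V} {A B : Set V}
    (hAB : BipartitionOf H A B) (hMC : MatchingCovered H) : A.ncard = B.ncard := by
  obtain ⟨M, hM⟩ := exists_pm hMC
  obtain ⟨P, hP, hPu⟩ := pm_partner hM
  have hPinv : ∀ a, P (P a) = a := fun a => ((hPu (P a)) a (hP a).symm).symm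
  have himg : P '' A = B := by
    apply Set.eq_of_subset_of_subset
    · rintro y ⟨a, haA, rfl⟩
      exact (hAB.2.2 (M.adj_sub (hP a))).mp haA
    · intro y hyB
      refine ⟨P y, ?_, hPinv y⟩
      have : H.Adj y (P y) := M.adj_sub (hP y)
      by_contra hPyA
      have : P y ∈ B := by
        rcases Set.eq_univ_iff_forall.mp hAB.1 (P y) with h | h
        · exact absurd h hPyA
        · exact h
      exact absurd ((hAB.2.2 (M.adj_sub (hP y)).symm).mpr hyB) (fun h => hPyA h)
  have hPinj : Function.Injective P := by
    intro a a' h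
    have := congrArg P h; rwa [hPinv, hPinv] at this
  rw [← himg, Set.ncard_image_of_injective _ hPinj]

private lemma strictHall {V : Type*} [Fintype V] {H : SimpleGraph V} {A B : Set V}
    (hAB : BipartitionOf H A B) (hMC : MatchingCovered H) {S : Set V}
    (hSA : S ⊆ A) (hne : S.Nonempty) (hprop : S ≠ A) :
    S.ncard + 1 ≤ (NSet H S).ncard := by
  have hsideB : ∀ {a y : V}, a ∈ A → H.Adj a y → y ∈ B := fun ha h => (hAB.2.2 h).mp ha
  -- a vertex of A not in S
  have hAS : ¬ A ⊆ S := fun h => hprop (Set.Subset.antisymm hSA h)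
  obtain ⟨a', ha'A, ha'S⟩ := Set.not_subset.mp hAS
  -- boundary edge of X := S ∪ NSet H S
  have ha'X : a' ∉ S ∪ NSet H S := by
    rintro (h | ⟨z, hzS, hza⟩)
    · exact ha'S h
    · exact hAB.2.1.ne_of_mem ha'A (hsideB (hSA hzS) hza) rfl
  obtain ⟨x₀, hx₀⟩ := hne
  obtain ⟨w⟩ := hMC.2.1.preconnected x₀ a'
  obtain ⟨p, q, hpX, hqX, hpq⟩ := boundary_edge w (Or.inl hx₀ : x₀ ∈ S ∪ NSet H S) ha'X
  have hpNS : p ∈ NSet H S := by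
    rcases hpX with h | h
    · exact absurd (Or.inr ⟨p, h, hpq⟩ : q ∈ S ∪ NSet H S) hqX
    · exact h
  -- perfect matching through the boundary edge
  obtain ⟨M, hM, hpqM⟩ := hMC.2.2 s(p, q) (H.mem_edgeSet.mpr hpq)
  have hMpq : M.Adj p q := SimpleGraph.Subgraph.mem_edgeSet.mp hpqM
  obtain ⟨P, hP, hPu⟩ := pm_partner hM
  have hPinj : Function.Injective P := by
    intro a₁ a₂ h
    have e1 : a₁ = P (P a₁) := hPu (P a₁) a₁ (hP a₁).symm
    have e2 : a₂ = P (P a₂) := hPu (P a₂) a₂ (hP a₂).symm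
    rw [e1, e2, h]
  have hmaps : ∀ a ∈ S, P a ∈ NSet H S \ {p} := by
    intro a haS
    refine ⟨⟨a, haS, M.adj_sub (hP a)⟩, ?_⟩
    intro hPa
    rw [Set.mem_singleton_iff] at hPa
    have : M.Adj a p := hPa ▸ hP a
    have haPp : a = P p := hPu p a this.symm
    have hq : q = P p := hPu p q hMpq
    have : a = q := haPp.trans hq.symm
    exact hqX (this ▸ Or.inl haS)
  have hcard : S.ncard ≤ (NSet H S \ {p}).ncard :=
    Set.ncard_le_ncard_of_injOn P hmaps (hPinj.injOn) (Set.toFinite _)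
  have h1 : (NSet H S \ {p}).ncard = (NSet H S).ncard - 1 :=
    Set.ncard_diff_singleton_of_mem hpNS
  have h2 : 1 ≤ (NSet H S).ncard := by
    have : 0 < (NSet H S).ncard := (Set.ncard_pos (Set.toFinite _)).mpr ⟨p, hpNS⟩
    omega
  omega
private lemma defic {V : Type*} [Fintype V] {H : SimpleGraph V} {A B : Set V}
    (hAB : BipartitionOf H A B) (hMC : MatchingCovered H) {b x : V}
    (hbA : b ∈ A) (hadj : H.Adj b x)
    (hconn : (H.deleteEdges {s(b, x)}).Connected)
    (hnr : ¬ RemovableEdge H s(b, x)) :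
    ∃ S : Set V, S ⊆ A ∧ S.Nonempty ∧ S ≠ A ∧ b ∈ S ∧
      (∀ a ∈ S, H.Adj a x → a = b) ∧ (NSet H S).ncard = S.ncard + 1 := by
  classical
  set H' := H.deleteEdges {s(b, x)} with hH'def
  have hH'H : ∀ {p q : V}, H'.Adj p q → H.Adj p q := fun h =>
    ((SimpleGraph.deleteEdges_adj).mp h).1
  have hxB : x ∈ B := (hAB.2.2 hadj).mp hbA
  have hmemAB : ∀ z : V, z ∉ A → z ∈ B := fun z hz => by
    rcases Set.eq_univ_iff_forall.mp hAB.1 z with h | h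
    · exact absurd h hz
    · exact h
  have hsideB : ∀ {a y : V}, a ∈ A → H.Adj a y → y ∈ B := fun ha h => (hAB.2.2 h).mp ha
  -- extract a bad edge
  have hbad0 : ∃ g ∈ H'.edgeSet, ∀ M : H'.Subgraph, M.IsPerfectMatching → g ∉ M.edgeSet := by
    by_contra hcon
    push_neg at hcon
    exact hnr ⟨H.mem_edgeSet.mpr hadj, hMC.1, hconn, hcon⟩
  obtain ⟨g, hg, hgbad⟩ := hbad0
  have hends : ∃ u v : V, u ∈ A ∧ H'.Adj u v ∧
      ∀ M : H'.Subgraph, M.IsPerfectMatching → ¬ M.Adj u v := by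
    induction g using Sym2.ind with
    | _ p q =>
      have hpq : H'.Adj p q := (SimpleGraph.mem_edgeSet _).mp hg
      by_cases hpA : p ∈ A
      · exact ⟨p, q, hpA, hpq, fun M hM hMA =>
          hgbad M hM (SimpleGraph.Subgraph.mem_edgeSet.mpr hMA)⟩
      · have hqA : q ∈ A := (hAB.2.2 (hH'H hpq).symm).mpr (hmemAB p hpA)
        exact ⟨q, p, hqA, hpq.symm, fun M hM hMA => hgbad M hM (by
          rw [show s(p, q) = s(q, p) from Sym2.eq_swap]
          exact SimpleGraph.Subgraph.mem_edgeSet.mpr hMA)⟩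
  obtain ⟨u, v, huA, huv, hbad⟩ := hends
  have hvB : v ∈ B := hsideB huA (hH'H huv)
  have huv_ne : u ≠ v := hAB.2.1.ne_of_mem huA hvB
  haveI : Fintype ↥(A \ {u} : Set V) := Fintype.ofFinite _
  let t : ↥(A \ {u} : Set V) → Finset V :=
    fun a => (Set.toFinite {y | H'.Adj a.1 y ∧ y ≠ v}).toFinset
  by_cases hHall : ∀ s : Finset ↥(A \ {u} : Set V), s.card ≤ (s.biUnion t).card
  · -- Hall's condition holds: build a perfect matching of H' through s(u,v); contradiction
    exfalso
    obtain ⟨f, hfinj, hft⟩ := (Finset.all_card_le_biUnion_card_iff_exists_injective t).mp hHall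
    have hftspec : ∀ a, H'.Adj a.1 (f a) ∧ f a ≠ v := fun a => by
      have h := hft a
      rwa [Set.Finite.mem_toFinset] at h
    have hfB : ∀ a : ↥(A \ {u} : Set V), f a ∈ B \ {v} := fun a =>
      ⟨hsideB a.2.1 (hH'H (hftspec a).1), (hftspec a).2⟩
    have hABc : A.ncard = B.ncard := cardAB hAB hMC
    have hcc : Nat.card ↥(A \ {u} : Set V) = Nat.card ↥(B \ {v} : Set V) := by
      rw [Nat.card_coe_set_eq, Nat.card_coe_set_eq,
        Set.ncard_diff_singleton_of_mem huA,
        Set.ncard_diff_singleton_of_mem hvB, hABc]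
    let f' : ↥(A \ {u} : Set V) → ↥(B \ {v} : Set V) := fun a => ⟨f a, hfB a⟩
    have hf'inj : Function.Injective f' := fun a₁ a₂ h => hfinj (congrArg Subtype.val h)
    have hf'bij : Function.Bijective f' :=
      (Nat.bijective_iff_injective_and_card f').mpr ⟨hf'inj, hcc⟩
    -- the matching relation
    set MAdj : V → V → Prop := fun p q =>
      (p = u ∧ q = v) ∨ (q = u ∧ p = v) ∨
      (∃ h : p ∈ A \ {u}, f ⟨p, h⟩ = q) ∨ (∃ h : q ∈ A \ {u}, f ⟨q, h⟩ = p) with hMAdj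
    have hadj_sub : ∀ {p q : V}, MAdj p q → H'.Adj p q := by
      rintro p q (⟨rfl, rfl⟩ | ⟨rfl, rfl⟩ | ⟨h, rfl⟩ | ⟨h, rfl⟩)
      · exact huv
      · exact huv.symm
      · exact (hftspec ⟨p, h⟩).1
      · exact (hftspec ⟨q, h⟩).1.symm
    have hsymm : Symmetric MAdj := by
      rintro p q (⟨h1, h2⟩ | ⟨h1, h2⟩ | h | h)
      · exact Or.inr (Or.inl ⟨h1, h2⟩)
      · exact Or.inl ⟨h1, h2⟩
      · exact Or.inr (Or.inr (Or.inr h))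
      · exact Or.inr (Or.inr (Or.inl h))
    -- basic side facts
    have hAnotB : ∀ {z : V}, z ∈ A → z ∈ B → False := fun hz hz' =>
      hAB.2.1.ne_of_mem hz hz' rfl
    have huB : u ∉ B := fun h => hAnotB huA h
    have hvA : v ∉ A := fun h => hAnotB h hvB
    have hcases : ∀ p : V, p = u ∨ p = v ∨ p ∈ A \ {u} ∨ p ∈ B \ {v} := by
      intro p
      by_cases hpu : p = u
      · exact Or.inl hpu
      by_cases hpv : p = v
      · exact Or.inr (Or.inl hpv)
      rcases Set.eq_univ_iff_forall.mp hAB.1 p with h | h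
      · exact Or.inr (Or.inr (Or.inl ⟨h, hpu⟩))
      · exact Or.inr (Or.inr (Or.inr ⟨h, hpv⟩))
    have hMatch : ∀ p : V, ∃! q : V, MAdj p q := by
      intro p
      rcases hcases p with rfl | rfl | hp | hp
      · -- p = u
        refine ⟨v, Or.inl ⟨rfl, rfl⟩, ?_⟩
        rintro q (⟨-, rfl⟩ | ⟨rfl, h2⟩ | ⟨h, rfl⟩ | ⟨h, hfq⟩)
        · rfl
        · exact absurd h2 huv_ne
        · exact absurd rfl h.2
        · exact absurd ((hfq ▸ (hfB ⟨q, h⟩).1 : p ∈ B)) huB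
      · -- p = v
        refine ⟨u, Or.inr (Or.inl ⟨rfl, rfl⟩), ?_⟩
        rintro q (⟨h1, -⟩ | ⟨rfl, -⟩ | ⟨h, -⟩ | ⟨h, hfq⟩)
        · exact absurd h1 (fun h => huv_ne h.symm)
        · rfl
        · exact absurd h.1 hvA
        · exact absurd hfq (hftspec ⟨q, h⟩).2
      · -- p ∈ A \ {u}
        refine ⟨f ⟨p, hp⟩, Or.inr (Or.inr (Or.inl ⟨hp, rfl⟩)), ?_⟩
        rintro q (⟨rfl, -⟩ | ⟨-, rfl⟩ | ⟨h, rfl⟩ | ⟨h, hfq⟩)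
        · exact absurd rfl hp.2
        · exact absurd hp.1 hvA
        · rfl
        · exact absurd ((hfq ▸ (hfB ⟨q, h⟩).1 : p ∈ B)) (fun hh => hAnotB hp.1 hh)
      · -- p ∈ B \ {v}
        obtain ⟨a, ha⟩ := hf'bij.2 ⟨p, hp⟩
        have hfa : f a = p := congrArg Subtype.val ha
        refine ⟨a.1, Or.inr (Or.inr (Or.inr ⟨a.2, by rwa [Subtype.coe_eta]⟩)), ?_⟩
        rintro q (⟨rfl, -⟩ | ⟨-, rfl⟩ | ⟨h, -⟩ | ⟨h, hfq⟩)
        · exact absurd hp.1 huB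
        · exact absurd rfl hp.2
        · exact absurd h.1 (fun hh => hAnotB hh hp.1)
        · have : f' ⟨q, h⟩ = ⟨p, hp⟩ := Subtype.ext hfq
          have := hf'inj (this.trans ha.symm)
          exact congrArg Subtype.val this
    let M : H'.Subgraph :=
      { verts := Set.univ
        Adj := MAdj
        adj_sub := fun h => hadj_sub h
        edge_vert := fun _ => Set.mem_univ _
        symm := ⟨fun _ _ h => hsymm h⟩ }
    have hMpm : M.IsPerfectMatching := ⟨fun p _ => hMatch p, fun p => Set.mem_univ p⟩
    exact hbad M hMpm (Or.inl ⟨rfl, rfl⟩)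
  · -- Hall's condition fails: extract the deficiency set
    push_neg at hHall
    obtain ⟨s, hs⟩ := hHall
    set S : Set V := Subtype.val '' (s : Set ↥(A \ {u} : Set V)) with hSdef
    have hSA : S ⊆ A := by rintro _ ⟨a, -, rfl⟩; exact a.2.1
    have hSu : u ∉ S := by rintro ⟨a, -, h⟩; exact a.2.2 h
    have hScard : S.ncard = s.card := by
      rw [hSdef, Set.ncard_image_of_injective _ Subtype.val_injective, Set.ncard_coe_finset]
    have hbiU : ((s.biUnion t : Finset V) : Set V) = NSet H' S \ {v} := by
      ext y
      constructor
      · intro hy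
        rw [Finset.mem_coe, Finset.mem_biUnion] at hy
        obtain ⟨a, haS, hy⟩ := hy
        rw [Set.Finite.mem_toFinset] at hy
        exact ⟨⟨a.1, ⟨a, haS, rfl⟩, hy.1⟩, hy.2⟩
      · rintro ⟨⟨z, hzS, hzy⟩, hyv⟩
        obtain ⟨a, haS, rfl⟩ := hzS
        rw [Finset.mem_coe, Finset.mem_biUnion]
        exact ⟨a, haS, (Set.Finite.mem_toFinset _).mpr ⟨hzy, hyv⟩⟩
    have hNcard : (NSet H' S \ {v}).ncard = (s.biUnion t).card := by
      rw [← hbiU, Set.ncard_coe_finset]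
    have hNS' : (NSet H' S).ncard ≤ S.ncard := by
      have h1 : NSet H' S ⊆ (NSet H' S \ {v}) ∪ {v} := by
        intro y hy
        by_cases hyv : y = v
        · exact Or.inr hyv
        · exact Or.inl ⟨hy, hyv⟩
      have h2 := Set.ncard_le_ncard h1 (Set.toFinite _)
      have h3 := Set.ncard_union_le (NSet H' S \ {v}) {v}
      rw [Set.ncard_singleton] at h3
      omega
    have hSne : S.Nonempty := by
      rw [← Set.ncard_pos (Set.toFinite _)]
      omega
    have hSneA : S ≠ A := fun h => hSu (h ▸ huA)
    have hSH : S.ncard + 1 ≤ (NSet H S).ncard := strictHall hAB hMC hSA hSne hSneA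
    have hsub' : NSet H' S ⊆ NSet H S := by
      rintro y ⟨a, ha, h⟩; exact ⟨a, ha, hH'H h⟩
    have hclaim : ∀ y ∈ NSet H S, y ∈ NSet H' S ∨ (y = x ∧ b ∈ S) := by
      rintro y ⟨a, haS, hay⟩
      by_cases hE : s(a, y) = s(b, x)
      · rw [Sym2.eq_iff] at hE
        rcases hE with ⟨rfl, rfl⟩ | ⟨rfl, rfl⟩
        · exact Or.inr ⟨rfl, haS⟩
        · exact absurd (hSA haS) (fun h => hAB.2.1.ne_of_mem h hxB rfl)
      · refine Or.inl ⟨a, haS, (SimpleGraph.deleteEdges_adj).mpr ⟨hay, ?_⟩⟩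
        simpa using hE
    have hbS : b ∈ S := by
      by_contra hbS
      have hsub : NSet H S ⊆ NSet H' S := fun y hy =>
        (hclaim y hy).resolve_right (fun h => hbS h.2)
      have := Set.ncard_le_ncard hsub (Set.toFinite _)
      omega
    have hxNS' : x ∉ NSet H' S := by
      intro hx'
      have hsub : NSet H S ⊆ NSet H' S := fun y hy => by
        rcases hclaim y hy with h | ⟨rfl, -⟩
        · exact h
        · exact hx'
      have := Set.ncard_le_ncard hsub (Set.toFinite _)
      omega
    have huniq : ∀ a ∈ S, H.Adj a x → a = b := by
      intro a haS hax
      by_contra hab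
      apply hxNS'
      refine ⟨a, haS, (SimpleGraph.deleteEdges_adj).mpr ⟨hax, ?_⟩⟩
      simp only [Set.mem_singleton_iff, Sym2.eq_iff]
      rintro (⟨h, -⟩ | ⟨h, -⟩)
      · exact hab h
      · exact hAB.2.1.ne_of_mem (hSA haS) hxB h
    have hEq : NSet H S = insert x (NSet H' S) := by
      apply Set.Subset.antisymm
      · intro y hy
        rcases hclaim y hy with h | ⟨rfl, -⟩
        · exact Set.mem_insert_of_mem _ h
        · exact Set.mem_insert _ _
      · intro y hy
        rcases hy with rfl | hy
        · exact ⟨b, hbS, hadj⟩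
        · exact hsub' hy
    have hfin : (NSet H S).ncard = (NSet H' S).ncard + 1 := by
      rw [hEq, Set.ncard_insert_of_notMem hxNS' (Set.toFinite _)]
    exact ⟨S, hSA, hSne, hSneA, hbS, huniq, by omega⟩
private lemma conn_del {V : Type*} {G : SimpleGraph V} (hc : G.Connected) {p q : V}
    (hR : (G.deleteEdges {s(p, q)}).Reachable p q) :
    (G.deleteEdges {s(p, q)}).Connected := by
  have hne : Nonempty V := hc.nonempty
  rw [SimpleGraph.connected_iff]
  refine ⟨fun a c => ?_, hne⟩
  obtain ⟨w⟩ := hc.preconnected a c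
  induction w with
  | nil => exact SimpleGraph.Reachable.refl _
  | @cons a' b' c' h w ih =>
    refine SimpleGraph.Reachable.trans ?_ ih
    by_cases hE : s(a', b') = s(p, q)
    · rw [Sym2.eq_iff] at hE
      rcases hE with ⟨rfl, rfl⟩ | ⟨rfl, rfl⟩
      · exact hR
      · exact hR.symm
    · exact SimpleGraph.Adj.reachable
        ((SimpleGraph.deleteEdges_adj).mpr ⟨h, by simpa using hE⟩)

private lemma core {V : Type*} [Fintype V] {H : SimpleGraph V}
    (hMC : MatchingCovered H) (hbip : BipartiteGraph H)
    {b x₁ x₂ c : V} (hdeg : 3 ≤ degOf H b) (hx : x₁ ≠ x₂) (hbc : b ≠ c)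
    (h1 : H.Adj b x₁) (h2 : H.Adj b x₂) (h3 : H.Adj c x₁) (h4 : H.Adj c x₂) :
    RemovableEdge H s(b, x₁) ∨ RemovableEdge H s(b, x₂) := by
  by_contra hcon
  push_neg at hcon
  obtain ⟨hn1, hn2⟩ := hcon
  obtain ⟨A, B, hAB, hbA⟩ : ∃ A B, BipartitionOf H A B ∧ b ∈ A := by
    obtain ⟨A, B, hAB⟩ := hbip
    rcases Set.eq_univ_iff_forall.mp hAB.1 b with h | h
    · exact ⟨A, B, hAB, h⟩
    · exact ⟨B, A, bip_symm hAB, h⟩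
  have hx₁B : x₁ ∈ B := (hAB.2.2 h1).mp hbA
  have hx₂B : x₂ ∈ B := (hAB.2.2 h2).mp hbA
  have hcA : c ∈ A := (hAB.2.2 h3).mpr hx₁B
  have hbx₁ : b ≠ x₁ := h1.ne
  have hbx₂ : b ≠ x₂ := h2.ne
  have hcx₁ : c ≠ x₁ := h3.ne
  have hcx₂ : c ≠ x₂ := h4.ne
  -- connectivity of the two edge-deleted graphs
  have hc1 : (H.deleteEdges {s(b, x₁)}).Connected := by
    apply conn_del hMC.2.1
    have e1 : (H.deleteEdges {s(b, x₁)}).Adj b x₂ := by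
      rw [SimpleGraph.deleteEdges_adj]
      refine ⟨h2, ?_⟩
      simp only [Set.mem_singleton_iff, Sym2.eq_iff]
      rintro (⟨-, h⟩ | ⟨h, -⟩)
      · exact hx h.symm
      · exact hbx₁ h
    have e2 : (H.deleteEdges {s(b, x₁)}).Adj x₂ c := by
      rw [SimpleGraph.deleteEdges_adj]
      refine ⟨h4.symm, ?_⟩
      simp only [Set.mem_singleton_iff, Sym2.eq_iff]
      rintro (⟨h, -⟩ | ⟨h, -⟩)
      · exact hbx₂ h.symm
      · exact hx h.symm
    have e3 : (H.deleteEdges {s(b, x₁)}).Adj c x₁ := by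
      rw [SimpleGraph.deleteEdges_adj]
      refine ⟨h3, ?_⟩
      simp only [Set.mem_singleton_iff, Sym2.eq_iff]
      rintro (⟨h, -⟩ | ⟨h, -⟩)
      · exact hbc h.symm
      · exact hcx₁ h
    exact (e1.reachable.trans e2.reachable).trans e3.reachable
  have hc2 : (H.deleteEdges {s(b, x₂)}).Connected := by
    apply conn_del hMC.2.1
    have e1 : (H.deleteEdges {s(b, x₂)}).Adj b x₁ := by
      rw [SimpleGraph.deleteEdges_adj]
      refine ⟨h1, ?_⟩
      simp only [Set.mem_singleton_iff, Sym2.eq_iff]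
      rintro (⟨-, h⟩ | ⟨h, -⟩)
      · exact hx h
      · exact hbx₂ h
    have e2 : (H.deleteEdges {s(b, x₂)}).Adj x₁ c := by
      rw [SimpleGraph.deleteEdges_adj]
      refine ⟨h3.symm, ?_⟩
      simp only [Set.mem_singleton_iff, Sym2.eq_iff]
      rintro (⟨h, -⟩ | ⟨h, -⟩)
      · exact hbx₁ h.symm
      · exact hx h
    have e3 : (H.deleteEdges {s(b, x₂)}).Adj c x₂ := by
      rw [SimpleGraph.deleteEdges_adj]
      refine ⟨h4, ?_⟩
      simp only [Set.mem_singleton_iff, Sym2.eq_iff]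
      rintro (⟨h, -⟩ | ⟨h, -⟩)
      · exact hbc h.symm
      · exact hcx₂ h
    exact (e1.reachable.trans e2.reachable).trans e3.reachable
  -- the two deficiency sets
  obtain ⟨S, hSA, hSne, hSneA, hbS, huS, hNS⟩ := defic hAB hMC hbA h1 hc1 hn1
  obtain ⟨T, hTA, hTne, hTneA, hbT, huT, hNT⟩ := defic hAB hMC hbA h2 hc2 hn2
  have hcS : c ∉ S := fun h => hbc (huS c h h3).symm
  have hcT : c ∉ T := fun h => hbc (huT c h h4).symm
  -- strict Hall on the union
  have hUA : S ∪ T ⊆ A := Set.union_subset hSA hTA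
  have hUne : (S ∪ T).Nonempty := ⟨b, Or.inl hbS⟩
  have hUneA : S ∪ T ≠ A := by
    intro h
    rw [← h] at hcA
    rcases hcA with h' | h'
    · exact hcS h'
    · exact hcT h'
  have hU := strictHall hAB hMC hUA hUne hUneA
  rw [NSet_union] at hU
  have hIE1 := Set.ncard_union_add_ncard_inter S T (Set.toFinite _) (Set.toFinite _)
  have hIE2 := Set.ncard_union_add_ncard_inter (NSet H S) (NSet H T)
    (Set.toFinite _) (Set.toFinite _)
  have hsubW : NSet H (S ∩ T) ⊆ NSet H S ∩ NSet H T :=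
    Set.subset_inter (NSet_mono H Set.inter_subset_left) (NSet_mono H Set.inter_subset_right)
  have hWle := Set.ncard_le_ncard hsubW (Set.toFinite _)
  have hNW : (NSet H (S ∩ T)).ncard ≤ (S ∩ T).ncard + 1 := by omega
  have hbW : b ∈ S ∩ T := ⟨hbS, hbT⟩
  have hx₁W : x₁ ∈ NSet H (S ∩ T) := ⟨b, hbW, h1⟩
  have hx₂W : x₂ ∈ NSet H (S ∩ T) := ⟨b, hbW, h2⟩
  have hW1 : 0 < (S ∩ T).ncard := (Set.ncard_pos (Set.toFinite _)).mpr ⟨b, hbW⟩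
  by_cases hWone : (S ∩ T).ncard = 1
  · -- S ∩ T = {b}, so b has degree ≤ 2
    obtain ⟨a, ha⟩ := Set.ncard_eq_one.mp hWone
    have hba : b = a := by
      have := ha ▸ hbW
      exact this
    subst hba
    have hNb : NSet H (S ∩ T) = H.neighborSet b := by
      rw [ha]
      ext y
      constructor
      · rintro ⟨z, hz, hadj⟩
        rw [Set.mem_singleton_iff] at hz
        exact hz ▸ hadj
      · intro hy
        exact ⟨b, rfl, hy⟩
    have hdeg2 : degOf H b ≤ 2 := by
      have : (NSet H (S ∩ T)).ncard = degOf H b := by rw [hNb]; rfl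
      omega
    omega
  · -- |S ∩ T| ≥ 2 : strict Hall fails for (S ∩ T) \ {b}
    have hW2 : 2 ≤ (S ∩ T).ncard := by omega
    have hW'card : ((S ∩ T) \ {b}).ncard = (S ∩ T).ncard - 1 :=
      Set.ncard_diff_singleton_of_mem hbW
    have hW'A : (S ∩ T) \ {b} ⊆ A := fun y hy => hSA hy.1.1
    have hW'ne : ((S ∩ T) \ {b}).Nonempty := by
      rw [← Set.ncard_pos (Set.toFinite _)]
      omega
    have hW'neA : (S ∩ T) \ {b} ≠ A := by
      intro h
      apply hSneA
      apply Set.Subset.antisymm hSA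
      rw [← h]
      exact fun y hy => hy.1.1
    have hH' := strictHall hAB hMC hW'A hW'ne hW'neA
    have hsub2 : NSet H ((S ∩ T) \ {b}) ⊆ NSet H (S ∩ T) \ {x₁, x₂} := by
      rintro y ⟨a, ⟨haW, hab⟩, hay⟩
      refine ⟨⟨a, haW, hay⟩, ?_⟩
      intro hy
      rcases hy with rfl | rfl
      · exact hab (Set.mem_singleton_iff.mpr (huS a haW.1 hay))
      · exact hab (Set.mem_singleton_iff.mpr (huT a haW.2 hay))
    have hpair : ({x₁, x₂} : Set V) ⊆ NSet H (S ∩ T) := by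
      intro y hy
      rcases hy with rfl | rfl
      · exact hx₁W
      · exact hx₂W
    have hdiffcard : (NSet H (S ∩ T) \ {x₁, x₂}).ncard = (NSet H (S ∩ T)).ncard - 2 := by
      rw [Set.ncard_diff hpair (Set.toFinite _), Set.ncard_pair hx]
    have hle2 := Set.ncard_le_ncard hsub2 (Set.toFinite _)
    omega
private lemma rem_swap {V : Type*} {H : SimpleGraph V} {a b : V}
    (h : RemovableEdge H s(a, b)) : RemovableEdge H s(b, a) := by
  rwa [Sym2.eq_swap]
/-- of two distinct edges at a vertex of degree at least three
lying in a common 4-cycle, at least one is removable. -/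
theorem stmt9 {V : Type*} [Fintype V] (H : SimpleGraph V)
    (hMC : MatchingCovered H) (hbip : BipartiteGraph H)
    (b : V) (hdeg : 3 ≤ degOf H b)
    (e f : Sym2 V) (hef : e ≠ f) (hbe : b ∈ e) (hbf : b ∈ f)
    (he : e ∈ H.edgeSet) (hf : f ∈ H.edgeSet)
    (v0 v1 v2 v3 : V) (hQ : Is4Cycle H v0 v1 v2 v3)
    (heQ : e ∈ ({s(v0, v1), s(v1, v2), s(v2, v3), s(v3, v0)} : Set (Sym2 V)))
    (hfQ : f ∈ ({s(v0, v1), s(v1, v2), s(v2, v3), s(v3, v0)} : Set (Sym2 V))) :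
    RemovableEdge H e ∨ RemovableEdge H f := by
  obtain ⟨n01, n02, n03, n12, n13, n23, a01, a12, a23, a30⟩ := hQ
  simp only [Set.mem_insert_iff, Set.mem_singleton_iff] at heQ hfQ
  rcases heQ with rfl | rfl | rfl | rfl <;> rcases hfQ with rfl | rfl | rfl | rfl
  · exact absurd rfl hef
  · -- e = 01, f = 12
    rw [Sym2.mem_iff] at hbe hbf
    rcases hbe with rfl | rfl
    · rcases hbf with h | h
      · exact absurd h n01
      · exact absurd h n02
    · exact (core hMC hbip hdeg n02 n13 a01.symm a12 a30 a23.symm).imp rem_swap id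
  · -- e = 01, f = 23 : impossible
    rw [Sym2.mem_iff] at hbe hbf
    rcases hbe with rfl | rfl
    · rcases hbf with h | h
      · exact absurd h n02
      · exact absurd h n03
    · rcases hbf with h | h
      · exact absurd h n12
      · exact absurd h n13
  · -- e = 01, f = 30
    rw [Sym2.mem_iff] at hbe hbf
    rcases hbe with rfl | rfl
    · exact (core hMC hbip hdeg n13 n02 a01 a30.symm a12.symm a23).imp id rem_swap
    · rcases hbf with h | h
      · simp_all
      · exact absurd h.symm n01
  · -- e = 12, f = 01
    rw [Sym2.mem_iff] at hbe hbf
    rcases hbe with rfl | rfl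
    · exact (core hMC hbip hdeg n02.symm n13 a12 a01.symm a23.symm a30).imp id rem_swap
    · rcases hbf with h | h
      · exact absurd h.symm n02
      · exact absurd h.symm n12
  · exact absurd rfl hef
  · -- e = 12, f = 23
    rw [Sym2.mem_iff] at hbe hbf
    rcases hbe with rfl | rfl
    · rcases hbf with h | h
      · exact absurd h n12
      · exact absurd h n13
    · exact (core hMC hbip hdeg n13 n02.symm a12.symm a23 a01 a30.symm).imp rem_swap id
  · -- e = 12, f = 30 : impossible
    rw [Sym2.mem_iff] at hbe hbf
    rcases hbe with rfl | rfl
    · rcases hbf with h | h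
      · simp_all
      · simp_all
    · rcases hbf with h | h
      · simp_all
      · simp_all
  · -- e = 23, f = 01 : impossible
    rw [Sym2.mem_iff] at hbe hbf
    rcases hbe with rfl | rfl
    · rcases hbf with h | h
      · exact absurd h.symm n02
      · exact absurd h.symm n12
    · rcases hbf with h | h
      · exact absurd h.symm n03
      · exact absurd h.symm n13
  · -- e = 23, f = 12
    rw [Sym2.mem_iff] at hbe hbf
    rcases hbe with rfl | rfl
    · exact (core hMC hbip hdeg n13.symm n02.symm a23 a12.symm a30.symm a01).imp id rem_swap
    · rcases hbf with h | h
      · exact absurd h.symm n13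
      · exact absurd h.symm n23
  · exact absurd rfl hef
  · -- e = 23, f = 30
    rw [Sym2.mem_iff] at hbe hbf
    rcases hbe with rfl | rfl
    · rcases hbf with h | h
      · exact absurd h n23
      · exact absurd h.symm n02
    · exact (core hMC hbip hdeg n02.symm n13.symm a23.symm a30 a12 a01.symm).imp rem_swap id
  · -- e = 30, f = 01
    rw [Sym2.mem_iff] at hbe hbf
    rcases hbe with rfl | rfl
    · rcases hbf with h | h
      · exact absurd h.symm n03
      · simp_all
    · exact (core hMC hbip hdeg n13.symm n02 a30.symm a01 a23 a12.symm).imp rem_swap id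
  · -- e = 30, f = 12 : impossible
    rw [Sym2.mem_iff] at hbe hbf
    rcases hbe with rfl | rfl
    · rcases hbf with h | h
      · exact absurd h.symm n13
      · exact absurd h.symm n23
    · rcases hbf with h | h
      · exact absurd h n01
      · exact absurd h n02
  · -- e = 30, f = 23
    rw [Sym2.mem_iff] at hbe hbf
    rcases hbe with rfl | rfl
    · exact (core hMC hbip hdeg n02 n13.symm a30 a23.symm a01.symm a12).imp id rem_swap
    · rcases hbf with h | h
      · exact absurd h n02
      · exact absurd h n03
  · exact absurd rfl hef
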